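/- Let A, B be sub-σ-algebras with ψ' = ψ'(A,B) > 0. Let (Aᵢ)_{i=1}^n be a finite A-measurable partition of Ω and (Bⱼ)_{j=1}^m a finite B-measurable partition of Ω. Define R(Aᵢ ∩ Bⱼ) = (1-ψ')⁻¹ P(Aᵢ ∩ Bⱼ) - (1-ψ')⁻¹ ψ' P(Aᵢ)P(Bⱼ). Then R(Aᵢ∩Bⱼ) ≥ 0 for all i,j, Σᵢ R(Aᵢ∩Bⱼ) = P(Bⱼ) for each j, and Σⱼ R(Aᵢ∩Bⱼ) = P(Aᵢ) for each i. -/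

import Mathlib

open MeasureTheory

/-- Properties of the auxiliary measure-like quantity `R(Aᵢ ∩ Bⱼ)` from Bradley's lemma:
nonnegativity and the two marginal identities. -/
theorem R_nonneg_and_marginals
    {Ω : Type*} {m : MeasurableSpace Ω} (P : Measure Ω) [IsProbabilityMeasure P]
    (𝒜 ℬ : MeasurableSpace Ω) (h𝒜 : 𝒜 ≤ m) (hℬ : ℬ ≤ m)
    (ψ' : ℝ)
    (hψdef : ψ' = sInf {r : ℝ | ∃ A B : Set Ω,
        MeasurableSet[𝒜] A ∧ MeasurableSet[ℬ] B ∧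
        0 < (P A).toReal * (P B).toReal ∧
        r = (P (A ∩ B)).toReal / ((P A).toReal * (P B).toReal)})
    (hψpos : 0 < ψ') (hψlt : ψ' < 1)
    (n mm : ℕ) (A : Fin n → Set Ω) (B : Fin mm → Set Ω)
    (hAmeas : ∀ i, MeasurableSet[𝒜] (A i)) (hBmeas : ∀ j, MeasurableSet[ℬ] (B j))
    (hAdisj : Pairwise (Function.onFun Disjoint A))
    (hBdisj : Pairwise (Function.onFun Disjoint B))
    (hAcov : (⋃ i, A i) = Set.univ) (hBcov : (⋃ j, B j) = Set.univ)
    (R : Fin n → Fin mm → ℝ)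
    (hRdef : ∀ i j, R i j = (1 - ψ')⁻¹ * (P (A i ∩ B j)).toReal -
        (1 - ψ')⁻¹ * ψ' * (P (A i)).toReal * (P (B j)).toReal) :
    (∀ i j, 0 ≤ R i j) ∧
    (∀ j, ∑ i, R i j = (P (B j)).toReal) ∧
    (∀ i, ∑ j, R i j = (P (A i)).toReal) := by
  have hden : (0:ℝ) < 1 - ψ' := by linarith
  -- sums of intersections
  have hAm : ∀ i, MeasurableSet[m] (A i) := fun i => h𝒜 _ (hAmeas i)
  have hBm : ∀ j, MeasurableSet[m] (B j) := fun j => hℬ _ (hBmeas j)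
  have hsumA : ∀ j, ∑ i, (P (A i ∩ B j)).toReal = (P (B j)).toReal := by
    intro j
    have hu : (⋃ i, A i ∩ B j) = B j := by
      rw [← Set.iUnion_inter, hAcov, Set.univ_inter]
    have hmeas : P (⋃ i, A i ∩ B j) = ∑' i, P (A i ∩ B j) :=
      measure_iUnion
        (fun i i' hii' => (hAdisj hii').mono Set.inter_subset_left Set.inter_subset_left)
        (fun i => (hAm i).inter (hBm j))
    rw [tsum_fintype] at hmeas
    rw [hu] at hmeas
    rw [← ENNReal.toReal_sum (fun i _ => measure_ne_top P _), ← hmeas]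
  have hsumB : ∀ i, ∑ j, (P (A i ∩ B j)).toReal = (P (A i)).toReal := by
    intro i
    have hu : (⋃ j, A i ∩ B j) = A i := by
      rw [← Set.inter_iUnion, hBcov, Set.inter_univ]
    have hmeas : P (⋃ j, A i ∩ B j) = ∑' j, P (A i ∩ B j) :=
      measure_iUnion
        (fun j j' hjj' => ((hBdisj hjj').mono Set.inter_subset_right Set.inter_subset_right))
        (fun j => (hAm i).inter (hBm j))
    rw [tsum_fintype] at hmeas
    rw [hu] at hmeas
    rw [← ENNReal.toReal_sum (fun j _ => measure_ne_top P _), ← hmeas]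
  have hsumPA : ∑ i, (P (A i)).toReal = 1 := by
    have hmeas : P (⋃ i, A i) = ∑' i, P (A i) := measure_iUnion hAdisj hAm
    rw [tsum_fintype] at hmeas
    rw [hAcov, measure_univ] at hmeas
    rw [← ENNReal.toReal_sum (fun i _ => measure_ne_top P _), ← hmeas, ENNReal.toReal_one]
  have hsumPB : ∑ j, (P (B j)).toReal = 1 := by
    have hmeas : P (⋃ j, B j) = ∑' j, P (B j) := measure_iUnion hBdisj hBm
    rw [tsum_fintype] at hmeas
    rw [hBcov, measure_univ] at hmeas
    rw [← ENNReal.toReal_sum (fun j _ => measure_ne_top P _), ← hmeas, ENNReal.toReal_one]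
  refine ⟨?_, ?_, ?_⟩
  · intro i j
    rw [hRdef]
    by_cases hpos : 0 < (P (A i)).toReal * (P (B j)).toReal
    · have hle : ψ' ≤ (P (A i ∩ B j)).toReal / ((P (A i)).toReal * (P (B j)).toReal) := by
        rw [hψdef]
        apply csInf_le
        · refine ⟨0, ?_⟩
          rintro r ⟨S, T, _, _, hpos', rfl⟩
          positivity
        · exact ⟨A i, B j, hAmeas i, hBmeas j, hpos, rfl⟩
      have hkey : ψ' * ((P (A i)).toReal * (P (B j)).toReal) ≤ (P (A i ∩ B j)).toReal :=
        (le_div_iff₀ hpos).mp hle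
      have h1 : (0:ℝ) ≤ (1 - ψ')⁻¹ := le_of_lt (inv_pos.mpr hden)
      nlinarith [hkey]
    · have hz : (P (A i)).toReal * (P (B j)).toReal = 0 := by
        have h0 : (0:ℝ) ≤ (P (A i)).toReal * (P (B j)).toReal :=
          mul_nonneg (ENNReal.toReal_nonneg (a := P (A i))) (ENNReal.toReal_nonneg (a := P (B j)))
        exact le_antisymm (not_lt.mp hpos) h0
      have hAB0 : (P (A i ∩ B j)).toReal = 0 := by
        rcases mul_eq_zero.mp hz with h | h
        · have : P (A i) = 0 := by
            have := (ENNReal.toReal_eq_zero_iff _).mp h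
            rcases this with h' | h'
            · exact h'
            · exact absurd h' (measure_ne_top P _)
          have : P (A i ∩ B j) = 0 :=
            measure_mono_null Set.inter_subset_left this
          simp [this]
        · have : P (B j) = 0 := by
            have := (ENNReal.toReal_eq_zero_iff _).mp h
            rcases this with h' | h'
            · exact h'
            · exact absurd h' (measure_ne_top P _)
          have : P (A i ∩ B j) = 0 :=
            measure_mono_null Set.inter_subset_right this
          simp [this]
      rw [hAB0]
      have : (1 - ψ')⁻¹ * ψ' * (P (A i)).toReal * (P (B j)).toReal = 0 := by
        rw [mul_assoc, hz, mul_zero]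
      linarith [this]
  · intro j
    have h1 : ∑ i, R i j = (1 - ψ')⁻¹ * (∑ i, (P (A i ∩ B j)).toReal)
        - (1 - ψ')⁻¹ * ψ' * (∑ i, (P (A i)).toReal) * (P (B j)).toReal := by
      rw [Finset.sum_congr rfl fun i _ => hRdef i j,
        Finset.sum_sub_distrib, ← Finset.mul_sum, ← Finset.sum_mul, ← Finset.mul_sum]
    rw [h1, hsumA j, hsumPA]
    field_simp
  · intro i
    have h1 : ∑ j, R i j = (1 - ψ')⁻¹ * (∑ j, (P (A i ∩ B j)).toReal)
        - (1 - ψ')⁻¹ * ψ' * (P (A i)).toReal * (∑ j, (P (B j)).toReal) := by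
      rw [Finset.sum_congr rfl fun j _ => hRdef i j,
        Finset.sum_sub_distrib, ← Finset.mul_sum, ← Finset.mul_sum]
    rw [h1, hsumB i, hsumPB]
    field_simp
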